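/- Weighted energy identity underlying Agmon's method: let d ≥ 1, let f : ℝ^d → ℝ be a C² function with compact support, let φ : ℝ^d → ℝ be C¹, and let V : ℝ^d → ℝ be continuous. Then ∫_{ℝ^d} e^{2φ(x)} f(x) ( −(1/2)Δf(x) + V(x) f(x) ) dx = (1/2)∫_{ℝ^d} ‖∇(e^{φ} f)(x)‖² dx + ∫_{ℝ^d} e^{2φ(x)} ( V(x) − (1/2)‖∇φ(x)‖² ) f(x)² dx. -/

import Mathlib

open MeasureTheory Real

noncomputable section

abbrev Rd (d : ℕ) : Type := EuclideanSpace ℝ (Fin d)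

/-- the `i`-th partial derivative of a real-valued function on `ℝ^d` -/
def pd {d : ℕ} (i : Fin d) (g : Rd d → ℝ) (x : Rd d) : ℝ :=
  fderiv ℝ g x (EuclideanSpace.single i 1)

lemma integral_fderiv_apply_eq_zero {d : ℕ} {U : Rd d → ℝ}
    (hU : ContDiff ℝ 1 U) (hs : HasCompactSupport U) (v : Rd d) :
    ∫ x : Rd d, fderiv ℝ U x v = 0 := by
  have hUd : Differentiable ℝ U := hU.differentiable one_ne_zero
  have hDc : Continuous (fderiv ℝ U) := (hU.fderiv_right (m := 0) (by norm_num)).continuous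
  obtain ⟨C, hC⟩ := (hs.fderiv ℝ).exists_bound_of_continuous hDc
  set K' : Set (Rd d) := Metric.cthickening ‖v‖ (tsupport U) with hK'
  have hK'c : IsCompact K' := hs.cthickening
  have hK'm : MeasurableSet K' := Metric.isClosed_cthickening.measurableSet
  set bound : Rd d → ℝ := K'.indicator (fun _ => C * ‖v‖) with hbound
  have hbint : Integrable bound := by
    refine (integrable_indicator_iff hK'm).2 ?_
    exact integrableOn_const hK'c.measure_lt_top.ne
  have hmem : ∀ (a : Rd d) (t : ℝ), t ∈ Metric.ball (0:ℝ) 1 → a + t • v ∈ tsupport U → a ∈ K' := by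
    intro a t ht hmem
    refine Metric.mem_cthickening_of_dist_le a (a + t • v) _ _ hmem ?_
    rw [dist_eq_norm]
    have he : a - (a + t • v) = -(t • v) := by abel
    rw [he]
    calc ‖-(t • v)‖ = |t| * ‖v‖ := by rw [norm_neg, norm_smul, Real.norm_eq_abs]
    _ ≤ 1 * ‖v‖ := by
        apply mul_le_mul_of_nonneg_right _ (norm_nonneg v)
        exact le_of_lt (by simpa [Real.dist_eq] using ht)
    _ = ‖v‖ := one_mul _
  have hdiff : ∀ (a : Rd d) (t : ℝ),
      HasDerivAt (fun s : ℝ => U (a + s • v)) (fderiv ℝ U (a + t • v) v) t := by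
    intro a t
    have h1 : HasDerivAt (fun s : ℝ => a + s • v) v t := by
      simpa using (HasDerivAt.smul_const (hasDerivAt_id t) v).const_add a
    have h2 : HasFDerivAt U (fderiv ℝ U (a + t • v)) (a + t • v) :=
      (hUd (a + t • v)).hasFDerivAt
    exact h2.comp_hasDerivAt t h1
  have main := hasDerivAt_integral_of_dominated_loc_of_deriv_le
    (F := fun t (a : Rd d) => U (a + t • v))
    (F' := fun t (a : Rd d) => fderiv ℝ U (a + t • v) v)
    (x₀ := (0:ℝ)) (bound := bound) (μ := volume) (s := Metric.ball (0:ℝ) 1) (Metric.ball_mem_nhds _ one_pos)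
    (Filter.Eventually.of_forall fun t =>
      (hU.continuous.comp (by continuity)).aestronglyMeasurable)
    (by
      have : Integrable (fun a : Rd d => U (a + (0:ℝ) • v)) := by
        simpa using hU.continuous.integrable_of_hasCompactSupport hs
      exact this)
    ((hDc.comp (by continuity)).clm_apply continuous_const).aestronglyMeasurable
    (Filter.Eventually.of_forall fun a => by
      intro t ht
      by_cases h : a ∈ K'
      · rw [hbound, Set.indicator_of_mem h]
        calc ‖fderiv ℝ U (a + t • v) v‖ ≤ ‖fderiv ℝ U (a + t • v)‖ * ‖v‖ :=
              (fderiv ℝ U (a + t • v)).le_opNorm v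
        _ ≤ C * ‖v‖ := mul_le_mul_of_nonneg_right (hC _) (norm_nonneg v)
      · rw [hbound, Set.indicator_of_notMem h]
        have hns : a + t • v ∉ tsupport U := fun hm => h (hmem a t ht hm)
        have hz : fderiv ℝ U (a + t • v) = 0 := by
          by_contra hne
          exact hns (support_fderiv_subset ℝ hne)
        simp [hz])
    hbint
    (Filter.Eventually.of_forall fun a t _ => hdiff a t)
  have hconst : (fun t : ℝ => ∫ a : Rd d, U (a + t • v)) = fun _ => ∫ a : Rd d, U a := by
    funext t
    exact integral_add_right_eq_self U (t • v)
  have h0 : HasDerivAt (fun t : ℝ => ∫ a : Rd d, U (a + t • v)) 0 0 := by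
    rw [hconst]; exact hasDerivAt_const _ _
  have huniq := h0.unique main.2
  simpa using huniq.symm

lemma pd_def {d : ℕ} (i : Fin d) (g : Rd d → ℝ) (x : Rd d) :
    pd i g x = fderiv ℝ g x (EuclideanSpace.single i 1) := rfl

lemma pd_contDiff {d : ℕ} {g : Rd d → ℝ} {m : ℕ} (hg : ContDiff ℝ (m + 1) g) (i : Fin d) :
    ContDiff ℝ m (pd i g) := by
  have h : ContDiff ℝ m (fderiv ℝ g) := hg.fderiv_right (by exact_mod_cast le_refl (m + 1 : ℕ))
  unfold pd
  exact h.clm_apply contDiff_const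

lemma pd_continuous {d : ℕ} {g : Rd d → ℝ} (hg : ContDiff ℝ 1 g) (i : Fin d) :
    Continuous (pd i g) := by
  have : ContDiff ℝ (0 : ℕ) (pd i g) := pd_contDiff (m := 0) (by exact_mod_cast hg) i
  exact this.continuous

lemma pd_hasCompactSupport {d : ℕ} {g : Rd d → ℝ} (hg : HasCompactSupport g) (i : Fin d) :
    HasCompactSupport (pd i g) :=
  (hg.fderiv ℝ).comp_left (g := fun L : Rd d →L[ℝ] ℝ => L (EuclideanSpace.single i 1)) rfl

lemma grad_apply {d : ℕ} (g : Rd d → ℝ) (x : Rd d) (i : Fin d) :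
    gradient g x i = pd i g x := by
  have h := InnerProductSpace.toDual_symm_apply (𝕜 := ℝ) (E := Rd d)
    (y := fderiv ℝ g x) (x := EuclideanSpace.single i 1)
  rw [EuclideanSpace.inner_single_right] at h
  simpa [gradient, pd] using h

lemma norm_grad_sq {d : ℕ} (g : Rd d → ℝ) (x : Rd d) :
    ‖gradient g x‖ ^ 2 = ∑ i, pd i g x ^ 2 := by
  rw [EuclideanSpace.norm_eq, Real.sq_sqrt (by positivity)]
  exact Finset.sum_congr rfl fun i _ => by
    rw [Real.norm_eq_abs, sq_abs, grad_apply]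

/-- Weighted energy identity underlying Agmon's method:
`∫ e^{2φ} f (−½Δf + Vf) = ½∫ ‖∇(e^φ f)‖² + ∫ e^{2φ}(V − ½‖∇φ‖²) f²`. -/
theorem weighted_energy_identity (d : ℕ) (hd : 1 ≤ d)
    (f : Rd d → ℝ) (hf : ContDiff ℝ 2 f) (hsupp : HasCompactSupport f)
    (φ : Rd d → ℝ) (hφ : ContDiff ℝ 1 φ)
    (V : Rd d → ℝ) (hV : Continuous V) :
    ∫ x : Rd d, Real.exp (2 * φ x) * f x * (-(1/2) * (∑ i, pd i (pd i f) x) + V x * f x)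
      = (1/2) * (∫ x : Rd d, ‖gradient (fun y => Real.exp (φ y) * f y) x‖ ^ 2)
        + ∫ x : Rd d, Real.exp (2 * φ x) * (V x - (1/2) * ‖gradient φ x‖ ^ 2) * f x ^ 2 := by
  have hf1 : ContDiff ℝ 1 f := hf.of_le one_le_two
  have hfd : Differentiable ℝ f := hf1.differentiable one_ne_zero
  have hφd : Differentiable ℝ φ := hφ.differentiable one_ne_zero
  have hpdf : ∀ i, ContDiff ℝ 1 (pd i f) := fun i => pd_contDiff (m := 1) (by exact_mod_cast hf) i
  have hpdfd : ∀ i, Differentiable ℝ (pd i f) := fun i => (hpdf i).differentiable one_ne_zero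
  have hpdfc : ∀ i, Continuous (pd i f) := fun i => (hpdf i).continuous
  have hpdφc : ∀ i, Continuous (pd i φ) := fun i => pd_continuous hφ i
  set g : Rd d → ℝ := fun y => Real.exp (φ y) * f y with hgdef
  have hg : ContDiff ℝ 1 g := (Real.contDiff_exp.comp hφ).mul hf1
  set E2 : Rd d → ℝ := fun x => Real.exp (2 * φ x) with hE2def
  have hE2 : ContDiff ℝ 1 E2 := Real.contDiff_exp.comp (contDiff_const.mul hφ)
  set U : Fin d → Rd d → ℝ := fun i x => E2 x * f x * pd i f x with hUdef
  have hUc1 : ∀ i, ContDiff ℝ 1 (U i) := fun i => (hE2.mul hf1).mul (hpdf i)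
  have hUcs : ∀ i, HasCompactSupport (U i) := by
    intro i
    refine hsupp.mono' ?_
    intro x hx
    by_contra hxs
    have hfx : f x = 0 := image_eq_zero_of_notMem_tsupport hxs
    simp [hUdef, hfx] at hx
  -- derivative computations
  have hpdE2 : ∀ i x, pd i E2 x = E2 x * (2 * pd i φ x) := by
    intro i x
    have h : HasFDerivAt E2 (Real.exp (2 * φ x) • ((2:ℝ) • fderiv ℝ φ x)) x :=
      HasFDerivAt.exp (((hφd x).hasFDerivAt).const_mul (2:ℝ))
    rw [pd_def, h.fderiv]
    simp only [ContinuousLinearMap.smul_apply, smul_eq_mul, ← pd_def, hE2def]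
  have hpdE2f : ∀ i x, pd i (fun y => E2 y * f y) x
      = E2 x * (2 * pd i φ x) * f x + E2 x * pd i f x := by
    intro i x
    rw [pd_def, fderiv_fun_mul ((hE2.differentiable one_ne_zero) x) (hfd x)]
    simp only [ContinuousLinearMap.add_apply, ContinuousLinearMap.smul_apply, smul_eq_mul,
      ← pd_def]
    rw [hpdE2]
    ring
  have hpdU : ∀ i x, pd i (U i) x
      = (E2 x * (2 * pd i φ x) * f x + E2 x * pd i f x) * pd i f x
        + E2 x * f x * pd i (pd i f) x := by
    intro i x
    have : pd i (U i) x = pd i (fun y => (fun z => E2 z * f z) y * pd i f y) x := rfl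
    rw [this, pd_def, fderiv_fun_mul (((hE2.mul hf1).differentiable one_ne_zero) x) (hpdfd i x)]
    simp only [ContinuousLinearMap.add_apply, ContinuousLinearMap.smul_apply, smul_eq_mul,
      ← pd_def]
    rw [hpdE2f]
    ring
  have hpdg : ∀ i x, pd i g x = Real.exp (φ x) * pd i φ x * f x + Real.exp (φ x) * pd i f x := by
    intro i x
    have hexp : HasFDerivAt (fun y => Real.exp (φ y)) (Real.exp (φ x) • fderiv ℝ φ x) x :=
      HasFDerivAt.exp ((hφd x).hasFDerivAt)
    rw [hgdef]
    rw [pd_def, fderiv_fun_mul (hexp.differentiableAt) (hfd x)]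
    simp only [ContinuousLinearMap.add_apply, ContinuousLinearMap.smul_apply, smul_eq_mul]
    rw [hexp.fderiv]
    simp only [ContinuousLinearMap.smul_apply, smul_eq_mul, ← pd_def]
    ring
  -- support lemmas
  have hsuppg : tsupport g ⊆ tsupport f := by
    apply closure_mono
    intro x hx
    simp only [Function.mem_support, hgdef] at hx ⊢
    intro hfx; exact hx (by rw [hfx, mul_zero])
  -- integrability
  have hE2c : Continuous E2 := hE2.continuous
  have hpdgc : ∀ i, Continuous (pd i g) := fun i => pd_continuous hg i
  have hpdpdfc : ∀ i, Continuous (pd i (pd i f)) := fun i => pd_continuous (hpdf i) i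
  have IA : Integrable (fun x : Rd d =>
      E2 x * f x * (-(1/2) * (∑ i, pd i (pd i f) x) + V x * f x)) := by
    apply Continuous.integrable_of_hasCompactSupport
    · exact (hE2c.mul hf1.continuous).mul
        (((continuous_const.mul (continuous_finset_sum _ fun i _ => hpdpdfc i))).add
          (hV.mul hf1.continuous))
    · refine hsupp.mono' ?_
      intro x hx
      by_contra hxs
      have hfx : f x = 0 := image_eq_zero_of_notMem_tsupport hxs
      simp [hfx] at hx
  have IG : Integrable (fun x : Rd d => ∑ i, pd i g x ^ 2) := by
    apply Continuous.integrable_of_hasCompactSupport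
    · exact continuous_finset_sum _ fun i _ => (hpdgc i).pow 2
    · refine hsupp.mono' ?_
      intro x hx
      by_contra hxs
      have hxg : x ∉ tsupport g := fun h => hxs (hsuppg h)
      have hzero : fderiv ℝ g x = 0 := by
        by_contra hne
        exact hxg (support_fderiv_subset ℝ hne)
      have : ∀ i, pd i g x = 0 := fun i => by rw [pd, hzero]; simp
      simp only [Function.mem_support] at hx
      exact hx (Finset.sum_eq_zero fun i _ => by rw [this i]; ring)
  have IY : Integrable (fun x : Rd d =>
      E2 x * (V x - 1/2 * ∑ i, pd i φ x ^ 2) * f x ^ 2) := by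
    apply Continuous.integrable_of_hasCompactSupport
    · exact (hE2c.mul (hV.sub (continuous_const.mul
        (continuous_finset_sum _ fun i _ => (hpdφc i).pow 2)))).mul (hf1.continuous.pow 2)
    · refine hsupp.mono' ?_
      intro x hx
      by_contra hxs
      have hfx : f x = 0 := image_eq_zero_of_notMem_tsupport hxs
      simp [hfx] at hx
  have IS : ∀ i : Fin d, Integrable (fun x : Rd d => pd i (U i) x) := fun i =>
    (pd_continuous (hUc1 i) i).integrable_of_hasCompactSupport (pd_hasCompactSupport (hUcs i) i)
  have ISsum : Integrable (fun x : Rd d => ∑ i, pd i (U i) x) :=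
    integrable_finset_sum _ fun i _ => IS i
  -- the pointwise identity
  have key : ∀ x : Rd d,
      E2 x * f x * (-(1/2) * (∑ i, pd i (pd i f) x) + V x * f x)
      = (1/2) * (∑ i, pd i g x ^ 2)
        + E2 x * (V x - 1/2 * ∑ i, pd i φ x ^ 2) * f x ^ 2
        - (1/2) * ∑ i, pd i (U i) x := by
    intro x
    have e2 : E2 x = Real.exp (φ x) * Real.exp (φ x) := by
      show Real.exp (2 * φ x) = _
      rw [two_mul, Real.exp_add]
    have h1 : ∑ i, pd i g x ^ 2
        = Real.exp (φ x) ^ 2 * f x ^ 2 * (∑ i, pd i φ x ^ 2)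
          + 2 * (Real.exp (φ x) ^ 2 * f x) * (∑ i, pd i φ x * pd i f x)
          + Real.exp (φ x) ^ 2 * (∑ i, pd i f x ^ 2) := by
      rw [Finset.mul_sum, Finset.mul_sum, Finset.mul_sum, ← Finset.sum_add_distrib,
        ← Finset.sum_add_distrib]
      exact Finset.sum_congr rfl fun i _ => by rw [hpdg]; ring
    have h2 : ∑ i, pd i (U i) x
        = 2 * (E2 x * f x) * (∑ i, pd i φ x * pd i f x)
          + E2 x * (∑ i, pd i f x ^ 2)
          + E2 x * f x * (∑ i, pd i (pd i f) x) := by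
      rw [Finset.mul_sum, Finset.mul_sum, Finset.mul_sum, ← Finset.sum_add_distrib,
        ← Finset.sum_add_distrib]
      exact Finset.sum_congr rfl fun i _ => by rw [hpdU]; ring
    rw [h1, h2, e2]
    ring
  -- assemble
  simp only [norm_grad_sq]
  calc ∫ x : Rd d, E2 x * f x * (-(1/2) * (∑ i, pd i (pd i f) x) + V x * f x)
      = ∫ x : Rd d, ((1/2) * (∑ i, pd i g x ^ 2)
          + E2 x * (V x - 1/2 * ∑ i, pd i φ x ^ 2) * f x ^ 2
          - (1/2) * ∑ i, pd i (U i) x) := by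
        exact integral_congr_ae (Filter.Eventually.of_forall key)
    _ = (∫ x : Rd d, ((1/2) * (∑ i, pd i g x ^ 2)
          + E2 x * (V x - 1/2 * ∑ i, pd i φ x ^ 2) * f x ^ 2))
        - ∫ x : Rd d, (1/2) * ∑ i, pd i (U i) x := by
        exact integral_sub ((IG.const_mul _).add IY) (ISsum.const_mul _)
    _ = (1/2) * (∫ x : Rd d, ∑ i, pd i g x ^ 2)
        + ∫ x : Rd d, E2 x * (V x - 1/2 * ∑ i, pd i φ x ^ 2) * f x ^ 2 := by
        rw [integral_add (IG.const_mul _) IY, integral_const_mul, integral_const_mul]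
        have hz : ∫ x : Rd d, ∑ i, pd i (U i) x = 0 := by
          rw [integral_finset_sum _ fun i _ => IS i]
          exact Finset.sum_eq_zero fun i _ =>
            integral_fderiv_apply_eq_zero (hUc1 i) (hUcs i) (EuclideanSpace.single i 1)
        rw [hz]
        ring
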